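/- For any u in the weighted Sobolev space H with ‖u‖_H^2 = ∫_0^R (r u_r^2 + u^2/r) dr = K, one has ∫_0^R r u^4 dr ≤ 2 R^2 K^2. -/

import Mathlib

open MeasureTheory Set

/-- if `‖u‖_H² = ∫_0^R (r u'² + u²/r) dr = K` then `∫_0^R r u⁴ ≤ 2 R² K²`. -/
theorem stmt12 (R : ℝ) (hR : 0 < R) (K : ℝ) (u u' : ℝ → ℝ)
    (hderiv : ∀ x ∈ Icc (0:ℝ) R, HasDerivAt u (u' x) x)
    (hu0 : u 0 = 0) (huR : u R = 0)
    (hE1 : IntegrableOn (fun r => r * u' r ^ 2) (Ioo 0 R))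
    (hE2 : IntegrableOn (fun r => u r ^ 2 / r) (Ioo 0 R))
    (hK : ∫ r in Ioo (0:ℝ) R, (r * u' r ^ 2 + u r ^ 2 / r) = K) :
    ∫ r in Ioo (0:ℝ) R, r * u r ^ 4 ≤ 2 * R ^ 2 * K ^ 2 := by
  set g : ℝ → ℝ := fun r => r * u' r ^ 2 + u r ^ 2 / r with hgdef
  have hg : IntegrableOn g (Ioo 0 R) := hE1.add hE2
  -- pointwise AM-GM: for 0 < r, |2 u u'| ≤ g r
  have hAM : ∀ r : ℝ, 0 < r → |2 * u r * u' r| ≤ g r := by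
    intro r hr
    have h1 : u r ^ 2 / r * r = u r ^ 2 := div_mul_cancel₀ _ (ne_of_gt hr)
    simp only [hgdef]
    rw [abs_le]
    constructor
    · nlinarith [sq_nonneg (r * u' r + u r), sq_nonneg (r * u' r - u r), hr, h1]
    · nlinarith [sq_nonneg (r * u' r + u r), sq_nonneg (r * u' r - u r), hr, h1]
  have hgnonneg : ∀ r : ℝ, 0 < r → 0 ≤ g r := fun r hr =>
    le_trans (abs_nonneg _) (hAM r hr)
  -- K is the integral of g
  have hKval : ∫ r in Ioo (0:ℝ) R, g r = K := hK
  have hK0 : 0 ≤ K := by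
    rw [← hKval]
    exact setIntegral_nonneg measurableSet_Ioo (fun r hr => hgnonneg r hr.1)
  -- ∫ u²/r ≤ K
  have hK2 : ∫ r in Ioo (0:ℝ) R, u r ^ 2 / r ≤ K := by
    have hsplit : ∫ r in Ioo (0:ℝ) R, g r
        = (∫ r in Ioo (0:ℝ) R, r * u' r ^ 2) + ∫ r in Ioo (0:ℝ) R, u r ^ 2 / r :=
      integral_add hE1 hE2
    have h1 : 0 ≤ ∫ r in Ioo (0:ℝ) R, r * u' r ^ 2 :=
      setIntegral_nonneg measurableSet_Ioo (fun r hr => by have := hr.1; positivity)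
    rw [← hKval, hsplit]; linarith
  -- measurability of 2 u u' on Ioo 0 R
  have huc : ContinuousOn u (Ioo 0 R) := fun x hx =>
    ((hderiv x (Ioo_subset_Icc_self hx)).continuousAt).continuousWithinAt
  have hmeas : AEStronglyMeasurable (fun t => 2 * u t * u' t)
      (volume.restrict (Ioo 0 R)) := by
    have hd : AEStronglyMeasurable (fun t => 2 * u t * deriv u t)
        (volume.restrict (Ioo 0 R)) := by
      exact (((huc.aestronglyMeasurable measurableSet_Ioo).const_mul 2).mul
        (measurable_deriv u).aestronglyMeasurable.restrict)
    refine hd.congr ?_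
    filter_upwards [ae_restrict_mem measurableSet_Ioo] with t ht
    rw [(hderiv t (Ioo_subset_Icc_self ht)).deriv]
  -- sup bound: u x ^ 2 ≤ K on Icc 0 R
  have hsup : ∀ x ∈ Icc (0:ℝ) R, u x ^ 2 ≤ K := by
    intro x hx
    obtain ⟨hx0, hxR⟩ := hx
    -- integrability of 2 u u' on Ioo 0 x
    have hsub : Ioo (0:ℝ) x ⊆ Ioo 0 R := Ioo_subset_Ioo le_rfl hxR
    have hint : IntegrableOn (fun t => 2 * u t * u' t) (Ioo 0 x) := by
      refine Integrable.mono (hg.mono_set hsub) (hmeas.mono_set hsub) ?_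
      filter_upwards [ae_restrict_mem measurableSet_Ioo] with t ht
      rw [Real.norm_eq_abs, Real.norm_eq_abs, abs_of_nonneg (hgnonneg t ht.1)]
      exact hAM t ht.1
    have hgint : IntegrableOn g (Ioo 0 x) := hg.mono_set hsub
    have hii : IntervalIntegrable (fun t => 2 * u t * u' t) volume 0 x := by
      rw [intervalIntegrable_iff, uIoc_of_le hx0, integrableOn_Ioc_iff_integrableOn_Ioo]
      exact hint
    have hgii : IntervalIntegrable g volume 0 x := by
      rw [intervalIntegrable_iff, uIoc_of_le hx0, integrableOn_Ioc_iff_integrableOn_Ioo]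
      exact hgint
    have hFTC : ∫ t in (0:ℝ)..x, 2 * u t * u' t = u x ^ 2 - u 0 ^ 2 := by
      refine intervalIntegral.integral_eq_sub_of_hasDerivAt
        (f := fun t => u t ^ 2) (fun t ht => ?_) hii
      rw [uIcc_of_le hx0] at ht
      have h := (hderiv t ⟨ht.1, le_trans ht.2 hxR⟩).fun_pow 2
      refine h.congr_deriv ?_
      norm_num
    have hmono : ∫ t in (0:ℝ)..x, 2 * u t * u' t ≤ ∫ t in (0:ℝ)..x, g t := by
      refine intervalIntegral.integral_mono_on hx0 hii hgii (fun t ht => ?_)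
      rcases eq_or_lt_of_le ht.1 with h | h
      · simp [hgdef, ← h, hu0]
      · exact le_trans (le_abs_self _) (hAM t h)
    have heq : ∫ t in (0:ℝ)..x, g t = ∫ t in Ioo (0:ℝ) x, g t := by
      rw [intervalIntegral.integral_of_le hx0]
      exact (setIntegral_congr_set Ioo_ae_eq_Ioc).symm
    have hle : ∫ t in Ioo (0:ℝ) x, g t ≤ ∫ t in Ioo (0:ℝ) R, g t := by
      refine setIntegral_mono_set hg ?_ (HasSubset.Subset.eventuallyLE hsub)
      filter_upwards [ae_restrict_mem measurableSet_Ioo] with t ht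
      exact hgnonneg t ht.1
    have : u x ^ 2 - u 0 ^ 2 ≤ K := by
      rw [← hFTC]; rw [heq] at hmono; rw [hKval] at hle; linarith
    simpa [hu0] using this
  -- pointwise bound r u⁴ ≤ K R² (u²/r)
  have hpt : ∀ r ∈ Ioo (0:ℝ) R, r * u r ^ 4 ≤ K * R ^ 2 * (u r ^ 2 / r) := by
    intro r hr
    have hr0 : 0 < r := hr.1
    have hrR : r ≤ R := le_of_lt hr.2
    have h1 : u r ^ 2 / r * r = u r ^ 2 := div_mul_cancel₀ _ (ne_of_gt hr0)
    have h2 : u r ^ 2 ≤ K := hsup r ⟨le_of_lt hr0, hrR⟩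
    have h3 : 0 ≤ u r ^ 2 / r := by positivity
    have e : r * u r ^ 4 = (u r ^ 2 / r) * (r ^ 2 * u r ^ 2) := by
      field_simp
    have hRK : r ^ 2 * u r ^ 2 ≤ R ^ 2 * K :=
      mul_le_mul (by nlinarith) h2 (sq_nonneg _) (by positivity)
    calc r * u r ^ 4 = (u r ^ 2 / r) * (r ^ 2 * u r ^ 2) := e
      _ ≤ (u r ^ 2 / r) * (R ^ 2 * K) := mul_le_mul_of_nonneg_left hRK h3
      _ = K * R ^ 2 * (u r ^ 2 / r) := by ring
  -- conclude
  have hInt2 : Integrable (fun r => K * R ^ 2 * (u r ^ 2 / r))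
      (volume.restrict (Ioo 0 R)) := hE2.const_mul _
  have hmain : ∫ r in Ioo (0:ℝ) R, r * u r ^ 4
      ≤ ∫ r in Ioo (0:ℝ) R, K * R ^ 2 * (u r ^ 2 / r) := by
    refine integral_mono_of_nonneg ?_ hInt2 ?_
    · filter_upwards [ae_restrict_mem measurableSet_Ioo] with r hr
      have := hr.1; positivity
    · filter_upwards [ae_restrict_mem measurableSet_Ioo] with r hr
      exact hpt r hr
  have hfin : ∫ r in Ioo (0:ℝ) R, K * R ^ 2 * (u r ^ 2 / r) ≤ K * R ^ 2 * K := by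
    rw [integral_const_mul]
    exact mul_le_mul_of_nonneg_left hK2 (by positivity)
  nlinarith [sq_nonneg K, sq_nonneg R, hK0]
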